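/- arXiv:2604.04772 — 2 statements merged into one kernel-verified Lean document; each statement's English description precedes it below -/
import Mathlib

section
/- Let α, β, γ ≥ 0 and let h, p : ℝ → ℝ be differentiable functions such that h(0) ≥ 0, p(0) ≥ 0, p'(t) + β·p(t) ≥ 0 for all t ≥ 0, and h'(t) ≥ p(t) − (α+γ)·h(t) for all t ≥ 0. Then h(t) ≥ 0 for all t ≥ 0. -/
lemma gronwall_nonneg (c : ℝ) (hc : 0 ≤ c) (f : ℝ → ℝ) (hf : Differentiable ℝ f)
    (h0 : 0 ≤ f 0) (hd : ∀ t, 0 ≤ t → 0 ≤ deriv f t + c * f t) :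
    ∀ t, 0 ≤ t → 0 ≤ f t := by
  intro t ht
  set g : ℝ → ℝ := fun t => Real.exp (c * t) * f t with hg
  have gdiff : Differentiable ℝ g := by
    exact (Real.differentiable_exp.comp ((differentiable_const c).mul differentiable_id)).mul hf
  have hderiv : ∀ x, deriv g x = Real.exp (c * x) * (deriv f x + c * f x) := by
    intro x
    have h1 : HasDerivAt (fun y => c * y) c x := by
      simpa using (hasDerivAt_id x).const_mul c
    have h2 : HasDerivAt (fun y => Real.exp (c * y)) (Real.exp (c * x) * c) x :=
      (Real.hasDerivAt_exp (c * x)).comp x h1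
    have h3 : HasDerivAt g (Real.exp (c * x) * c * f x + Real.exp (c * x) * deriv f x) x :=
      h2.mul (hf x).hasDerivAt
    rw [h3.deriv]; ring
  have mono : MonotoneOn g (Set.Ici (0:ℝ)) := by
    apply monotoneOn_of_deriv_nonneg (convex_Ici 0) gdiff.continuous.continuousOn
      (gdiff.differentiableOn)
    intro x hx
    rw [interior_Ici] at hx
    rw [hderiv]
    exact mul_nonneg (Real.exp_pos _).le (hd x hx.le)
  have : g 0 ≤ g t := mono (Set.self_mem_Ici) ht ht
  have h00 : g 0 = f 0 := by simp [hg]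
  have hpos : 0 < Real.exp (c * t) := Real.exp_pos _
  have h1 : (0:ℝ) ≤ Real.exp (c * t) * f t := le_trans (h00 ▸ h0) this
  nlinarith [h1, hpos]

/-- Time-domain abstraction of Lemma 1 (CCBF forward invariance). -/
theorem ccbf_forward_invariance (α β γ : ℝ) (hα : 0 ≤ α) (hβ : 0 ≤ β) (hγ : 0 ≤ γ)
    (h p : ℝ → ℝ) (hdiff : Differentiable ℝ h) (pdiff : Differentiable ℝ p)
    (h0 : 0 ≤ h 0) (p0 : 0 ≤ p 0)
    (hp : ∀ t, 0 ≤ t → deriv p t + β * p t ≥ 0)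
    (hh : ∀ t, 0 ≤ t → deriv h t ≥ p t - (α + γ) * h t) :
    ∀ t, 0 ≤ t → 0 ≤ h t := by
  have pnn : ∀ t, 0 ≤ t → 0 ≤ p t :=
    gronwall_nonneg β hβ p pdiff p0 (fun t ht => hp t ht)
  exact gronwall_nonneg (α + γ) (by linarith) h hdiff h0
    (fun t ht => by have := hh t ht; have := pnn t ht; linarith)
end

section
/- Let N ∈ ℕ, let x : ℝ → ℝ^N be a differentiable curve, let h : ℝ^N → ℝ be a function such that t ↦ h(x(t)) is differentiable, and let α, β, γ ≥ 0. Suppose there is a differentiable p : ℝ → ℝ with p(0) ≥ 0, p'(t) + β·p(t) ≥ 0 for all t ≥ 0, and (d/dt) h(x(t)) ≥ p(t) − (α+γ)·h(x(t)) for all t ≥ 0. If x(0) lies in C := {y ∈ ℝ^N : h(y) ≥ 0}, then x(t) ∈ C for all t ≥ 0. -/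
/-- Grönwall-type lemma: if `f 0 ≥ 0` and `f' t ≥ -c * f t` on `[0, ∞)` with
`c ≥ 0`, then `f` stays nonnegative on `[0, ∞)`. -/
lemma nonneg_of_deriv_ge_neg_mul (f : ℝ → ℝ) (hf : Differentiable ℝ f)
    (c : ℝ) (hc : 0 ≤ c) (h0 : 0 ≤ f 0)
    (hd : ∀ t, 0 ≤ t → -c * f t ≤ deriv f t) :
    ∀ t, 0 ≤ t → 0 ≤ f t := by
  set g : ℝ → ℝ := fun t => Real.exp (c * t) * f t with hg
  have hgdiff : Differentiable ℝ g := by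
    exact (Real.differentiable_exp.comp (differentiable_const c |>.mul
      differentiable_id)).mul hf
  have hgderiv : ∀ t, HasDerivAt g
      (c * Real.exp (c * t) * f t + Real.exp (c * t) * deriv f t) t := by
    intro t
    have h1 : HasDerivAt (fun s => Real.exp (c * s)) (c * Real.exp (c * t)) t := by
      have := (Real.hasDerivAt_exp (c * t)).comp t
        ((hasDerivAt_id t).const_mul c)
      simpa [mul_comm, Function.comp_def] using this
    exact h1.mul (hf t).hasDerivAt
  have hmono : MonotoneOn g (Set.Ici (0 : ℝ)) := by
    apply monotoneOn_of_deriv_nonneg (convex_Ici 0) hgdiff.continuous.continuousOn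
      (hgdiff.differentiableOn.mono interior_subset)
    intro t ht
    rw [interior_Ici] at ht
    have ht' : (0:ℝ) ≤ t := le_of_lt ht
    rw [(hgderiv t).deriv]
    have := hd t ht'
    have hexp : 0 < Real.exp (c * t) := Real.exp_pos _
    nlinarith [hexp.le]
  intro t ht
  have : g 0 ≤ g t := hmono (Set.self_mem_Ici) ht ht
  have hg0 : g 0 = f 0 := by simp [hg]
  have hgt : 0 ≤ g t := by rw [hg0] at this; linarith
  have hexp : 0 < Real.exp (c * t) := Real.exp_pos _
  have hgt' : 0 ≤ Real.exp (c * t) * f t := hgt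
  nlinarith [hgt']

/-- State-space statement of Lemma 1: forward invariance of the safe set
`C = {y | h y ≥ 0}` along the closed-loop trajectory `x`. -/
theorem safe_set_forward_invariant (N : ℕ)
    (x : ℝ → EuclideanSpace ℝ (Fin N)) (hx : Differentiable ℝ x)
    (h : EuclideanSpace ℝ (Fin N) → ℝ)
    (hhx : Differentiable ℝ (fun t => h (x t)))
    (α β γ : ℝ) (hα : 0 ≤ α) (hβ : 0 ≤ β) (hγ : 0 ≤ γ)
    (p : ℝ → ℝ) (pdiff : Differentiable ℝ p) (p0 : 0 ≤ p 0)
    (hp : ∀ t, 0 ≤ t → deriv p t + β * p t ≥ 0)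
    (hh : ∀ t, 0 ≤ t →
      deriv (fun s => h (x s)) t ≥ p t - (α + γ) * h (x t))
    (hx0 : x 0 ∈ {y : EuclideanSpace ℝ (Fin N) | h y ≥ 0}) :
    ∀ t, 0 ≤ t → x t ∈ {y : EuclideanSpace ℝ (Fin N) | h y ≥ 0} := by
  have hpnn : ∀ t, 0 ≤ t → 0 ≤ p t := by
    apply nonneg_of_deriv_ge_neg_mul p pdiff β hβ p0
    intro t ht
    have := hp t ht
    linarith
  intro t ht
  have : ∀ s, 0 ≤ s → 0 ≤ h (x s) := by
    apply nonneg_of_deriv_ge_neg_mul (fun s => h (x s)) hhx (α + γ) (by linarith)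
      hx0
    intro s hs
    have h1 := hh s hs
    have h2 := hpnn s hs
    linarith
  exact this t ht
end
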